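/- Let L ⊆ S and κ ∈ [0,1). Then ρ = 1 if and only if ρ^L_κ = 1 (equivalently, ρ < 1 if and only if ρ^L_κ < 1). -/

import Mathlib

open scoped Classical ENNReal NNReal

variable {S : Type*}

/-- The `n`-step transition probabilities `P^n(x,y)` (n-th matrix power of `P`). -/
noncomputable def kpow (P : S → S → ℝ) : ℕ → S → S → ℝ
  | 0, x, y => if x = y then 1 else 0
  | n+1, x, y => ∑' w, P x w * kpow P n w y

/-- `P` is a transition probability: nonnegative entries and each row sums to `1`. -/
def IsTransProb (P : S → S → ℝ) : Prop :=
  (∀ x y, 0 ≤ P x y) ∧ ∀ x, HasSum (P x) 1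

/-- `P` is irreducible: for all `x, y` there is `n ≥ 0` with `P^n(x,y) > 0`. -/
def Irred (P : S → S → ℝ) : Prop :=
  ∀ x y, ∃ n, 0 < kpow P n x y

/-- The Green function `G(x,y|z) = ∑_{n ≥ 0} P^n(x,y) zⁿ`, a sum in `[0,∞]`. -/
noncomputable def green (P : S → S → ℝ) (x y : S) (z : ℝ) : ℝ≥0∞ :=
  ∑' n, ENNReal.ofReal (kpow P n x y * z ^ n)

/-- Radius of convergence of the power series with coefficients `a`,
as the supremum (in `[0,∞]`) of the nonnegative `z` at which the series converges. -/
noncomputable def convRadius (a : ℕ → ℝ) : ℝ≥0∞ :=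
  ⨆ (z : ℝ≥0) (_ : Summable fun n => a n * (z : ℝ) ^ n), (z : ℝ≥0∞)

/-- The spectral radius as an extended nonnegative real: the reciprocal of the
radius of convergence of `G(x,x|·)` (independent of `x` when `P` is irreducible). -/
noncomputable def specRadiusE (P : S → S → ℝ) : ℝ≥0∞ :=
  ⨆ x, (convRadius fun n => kpow P n x x)⁻¹

/-- The spectral radius `ρ` of `P`. -/
noncomputable def specRadius (P : S → S → ℝ) : ℝ :=
  (specRadiusE P).toReal

/-- The `(L,κ)`-lazy version `P^L_κ` of `P`:
`P^L_κ(x,y) = κ·1_{x=y} + (1-κ)P(x,y)` for `x ∈ L`, and `P^L_κ(x,y) = P(x,y)` for `x ∉ L`. -/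
noncomputable def lazy (P : S → S → ℝ) (L : Set S) (κ : ℝ) : S → S → ℝ :=
  fun x y => if x ∈ L then (if x = y then κ else 0) + (1 - κ) * P x y else P x y

/-- First-return probabilities: `u_0(x,y) = 0`, `u_1(x,y) = P(x,y)`, and
`u_n(x,y) = ∑_{w ≠ y} P(x,w) u_{n-1}(w,y)` for `n ≥ 2`. -/
noncomputable def fret (P : S → S → ℝ) : ℕ → S → S → ℝ
  | 0, _, _ => 0
  | 1, x, y => P x y
  | n+2, x, y => ∑' w, if w = y then 0 else P x w * fret P (n+1) w y

/-- The U-function `U(x,y|z) = ∑_{n ≥ 0} u_n(x,y) zⁿ`, a sum in `[0,∞]`. -/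
noncomputable def Ufun (P : S → S → ℝ) (x y : S) (z : ℝ) : ℝ≥0∞ :=
  ∑' n, ENNReal.ofReal (fret P n x y * z ^ n)

/-- `r(U|x,y)`, the radius of convergence of `U(x,y|·)`. -/
noncomputable def rU (P : S → S → ℝ) (x y : S) : ℝ≥0∞ :=
  convRadius fun n => fret P n x y

/-- `P` is rho-recurrent if `G(x,x|1/ρ) = ∞` (for all, equivalently some, `x`). -/
def RhoRecurrent (P : S → S → ℝ) : Prop :=
  ∀ x, green P x x (specRadius P)⁻¹ = ∞

/-- `P` is rho-transient if `G(x,x|1/ρ) < ∞` (for all, equivalently some, `x`). -/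
def RhoTransient (P : S → S → ℝ) : Prop :=
  ∀ x, green P x x (specRadius P)⁻¹ ≠ ∞

/-- A rho-recurrent `P` is strictly rho-recurrent if `r(U|x,x) > 1/ρ` for some `x`. -/
def StrictlyRhoRecurrent (P : S → S → ℝ) : Prop :=
  RhoRecurrent P ∧ ∃ x, ENNReal.ofReal (specRadius P)⁻¹ < rU P x x

/-- A rho-recurrent `P` is critically rho-recurrent if `r(U|x,x) = 1/ρ` for all `x`. -/
def CriticallyRhoRecurrent (P : S → S → ℝ) : Prop :=
  RhoRecurrent P ∧ ∀ x, rU P x x = ENNReal.ofReal (specRadius P)⁻¹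

/-! ### Auxiliary development in `ℝ≥0∞` -/

/-- Powers of an `ℝ≥0∞`-valued kernel. -/
noncomputable def qpow (Q : S → S → ℝ≥0∞) : ℕ → S → S → ℝ≥0∞
  | 0, x, y => if x = y then 1 else 0
  | n+1, x, y => ∑' w, Q x w * qpow Q n w y

lemma tsum_ite_mul (x : S) (a : ℝ≥0∞) (f : S → ℝ≥0∞) :
    ∑' y, (if x = y then a else 0) * f y = a * f x := by
  rw [show (fun y => (if x = y then a else 0) * f y)
      = fun y => if y = x then a * f x else 0 from ?_, tsum_ite_eq]
  funext y
  by_cases h : x = y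
  · subst h; simp
  · simp [h, Ne.symm h]

lemma qpow_rowsum (Q : S → S → ℝ≥0∞) (hQ : ∀ x, ∑' y, Q x y = 1) :
    ∀ n x, ∑' y, qpow Q n x y = 1 := by
  intro n
  induction n with
  | zero =>
      intro x
      simpa [qpow] using (tsum_ite_mul x 1 (fun _ => (1:ℝ≥0∞)))
  | succ n ih =>
      intro x
      calc ∑' y, qpow Q (n+1) x y = ∑' y, ∑' w, Q x w * qpow Q n w y := rfl
        _ = ∑' w, ∑' y, Q x w * qpow Q n w y := ENNReal.tsum_comm
        _ = ∑' w, Q x w * ∑' y, qpow Q n w y := by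
              exact tsum_congr fun w => ENNReal.tsum_mul_left
        _ = ∑' w, Q x w := by simp [ih]
        _ = 1 := hQ x

lemma qpow_le_one (Q : S → S → ℝ≥0∞) (hQ : ∀ x, ∑' y, Q x y = 1) (n : ℕ) (x y : S) :
    qpow Q n x y ≤ 1 := by
  calc qpow Q n x y ≤ ∑' y, qpow Q n x y := ENNReal.le_tsum y
    _ = 1 := qpow_rowsum Q hQ n x

lemma qpow_add (Q : S → S → ℝ≥0∞) :
    ∀ m n x z, qpow Q (m+n) x z = ∑' y, qpow Q m x y * qpow Q n y z := by
  intro m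
  induction m with
  | zero =>
      intro n x z
      simp only [Nat.zero_add]
      have h1 := tsum_ite_mul x 1 (fun y => qpow Q n y z)
      rw [one_mul] at h1
      simp only [qpow]
      exact h1.symm
  | succ m ih =>
      intro n x z
      have hmn : m + 1 + n = (m + n) + 1 := by omega
      rw [hmn]
      calc qpow Q ((m+n)+1) x z = ∑' w, Q x w * qpow Q (m+n) w z := rfl
        _ = ∑' w, Q x w * ∑' y, qpow Q m w y * qpow Q n y z := by
              simp only [ih]
        _ = ∑' w, ∑' y, Q x w * (qpow Q m w y * qpow Q n y z) := by
              exact tsum_congr fun w => ENNReal.tsum_mul_left.symm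
        _ = ∑' y, ∑' w, Q x w * (qpow Q m w y * qpow Q n y z) := ENNReal.tsum_comm
        _ = ∑' y, qpow Q (m+1) x y * qpow Q n y z := by
              refine tsum_congr fun y => ?_
              rw [show (fun w => Q x w * (qpow Q m w y * qpow Q n y z))
                    = fun w => (Q x w * qpow Q m w y) * qpow Q n y z from by
                  funext w; ring, ENNReal.tsum_mul_right]
              rfl

/-- the ennreal version of `P`. -/
noncomputable def toQ (P : S → S → ℝ) : S → S → ℝ≥0∞ := fun x y => ENNReal.ofReal (P x y)

lemma toQ_rowsum {P : S → S → ℝ} (hP : IsTransProb P) (x : S) : ∑' y, toQ P x y = 1 := by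
  have hs : Summable (P x) := (hP.2 x).summable
  have h2 : ENNReal.ofReal (∑' y, P x y) = ∑' y, ENNReal.ofReal (P x y) :=
    ENNReal.ofReal_tsum_of_nonneg (fun y => hP.1 x y) hs
  simp only [toQ]
  rw [← h2, (hP.2 x).tsum_eq, ENNReal.ofReal_one]

lemma kpow_spec {P : S → S → ℝ} (hP : IsTransProb P) :
    ∀ n x y, 0 ≤ kpow P n x y ∧ ENNReal.ofReal (kpow P n x y) = qpow (toQ P) n x y := by
  intro n
  induction n with
  | zero =>
      intro x y
      constructor
      · by_cases h : x = y <;> simp [kpow, h]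
      · by_cases h : x = y <;> simp [kpow, qpow, h]
  | succ n ih =>
      intro x y
      set g : S → ℝ := fun w => P x w * kpow P n w y with hg
      have hg0 : ∀ w, 0 ≤ g w := fun w => mul_nonneg (hP.1 x w) (ih w y).1
      have hofg : ∀ w, ENNReal.ofReal (g w) = toQ P x w * qpow (toQ P) n w y := by
        intro w
        rw [hg, ENNReal.ofReal_mul (hP.1 x w), (ih w y).2]; rfl
      have hfin : ∑' w, toQ P x w * qpow (toQ P) n w y ≠ ⊤ := by
        have hle : ∑' w, toQ P x w * qpow (toQ P) n w y ≤ ∑' w, toQ P x w := by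
          refine ENNReal.tsum_le_tsum fun w => ?_
          calc toQ P x w * qpow (toQ P) n w y ≤ toQ P x w * 1 :=
              mul_le_mul_right (qpow_le_one _ (toQ_rowsum hP) n w y) _
            _ = toQ P x w := mul_one _
        rw [toQ_rowsum hP x] at hle
        exact ne_top_of_le_ne_top ENNReal.one_ne_top hle
      have hsum : Summable g := by
        have := ENNReal.summable_toReal (f := fun w => ENNReal.ofReal (g w))
          (by rw [tsum_congr hofg]; exact hfin)
        refine this.congr fun w => ?_
        exact ENNReal.toReal_ofReal (hg0 w)
      have hks : kpow P (n+1) x y = ∑' w, g w := rfl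
      constructor
      · rw [hks]; exact tsum_nonneg hg0
      · rw [hks, ENNReal.ofReal_tsum_of_nonneg hg0 hsum, tsum_congr hofg]; rfl

lemma kpow_nonneg {P : S → S → ℝ} (hP : IsTransProb P) (n : ℕ) (x y : S) :
    0 ≤ kpow P n x y := (kpow_spec hP n x y).1

lemma kpow_toReal {P : S → S → ℝ} (hP : IsTransProb P) (n : ℕ) (x y : S) :
    kpow P n x y = (qpow (toQ P) n x y).toReal := by
  rw [← (kpow_spec hP n x y).2, ENNReal.toReal_ofReal (kpow_nonneg hP n x y)]

/-- superharmonic bound: `(qpow^n h)(x) ≤ t^n h x`. -/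
lemma qpow_apply_le (Q : S → S → ℝ≥0∞) (h : S → ℝ≥0∞) (t : ℝ≥0∞)
    (hsup : ∀ x, ∑' y, Q x y * h y ≤ t * h x) :
    ∀ n x, ∑' y, qpow Q n x y * h y ≤ t ^ n * h x := by
  intro n
  induction n with
  | zero =>
      intro x
      simp only [qpow, pow_zero, one_mul]
      simpa using le_of_eq (tsum_ite_mul x 1 h)
  | succ n ih =>
      intro x
      calc ∑' y, qpow Q (n+1) x y * h y
          = ∑' y, (∑' w, Q x w * qpow Q n w y) * h y := rfl
        _ = ∑' y, ∑' w, Q x w * (qpow Q n w y * h y) := by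
              refine tsum_congr fun y => ?_
              rw [← ENNReal.tsum_mul_right]
              exact tsum_congr fun w => by ring
        _ = ∑' w, ∑' y, Q x w * (qpow Q n w y * h y) := ENNReal.tsum_comm
        _ = ∑' w, Q x w * ∑' y, qpow Q n w y * h y := by
              exact tsum_congr fun w => ENNReal.tsum_mul_left
        _ ≤ ∑' w, Q x w * (t ^ n * h w) := by
              exact ENNReal.tsum_le_tsum fun w => mul_le_mul_right (ih w) _
        _ = t ^ n * ∑' w, Q x w * h w := by
              rw [← ENNReal.tsum_mul_left]
              exact tsum_congr fun w => by ring
        _ ≤ t ^ n * (t * h x) := mul_le_mul_right (hsup x) _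
        _ = t ^ (n+1) * h x := by ring

lemma qpow_diag_le (Q : S → S → ℝ≥0∞) (h : S → ℝ≥0∞) (t : ℝ≥0∞)
    (hpos : ∀ x, h x ≠ 0) (hfin : ∀ x, h x ≠ ⊤)
    (hsup : ∀ x, ∑' y, Q x y * h y ≤ t * h x) (n : ℕ) (x : S) :
    qpow Q n x x ≤ t ^ n := by
  have h1 : qpow Q n x x * h x ≤ t ^ n * h x := by
    calc qpow Q n x x * h x ≤ ∑' y, qpow Q n x y * h y := ENNReal.le_tsum x
      _ ≤ t ^ n * h x := qpow_apply_le Q h t hsup n x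
  exact (ENNReal.mul_le_mul_iff_left (hpos x) (hfin x)).mp h1

/-- entrywise domination transfers to powers. -/
lemma qpow_mono_scaled (Q Q' : S → S → ℝ≥0∞) (b : ℝ≥0∞)
    (hle : ∀ x y, b * Q x y ≤ Q' x y) :
    ∀ n x y, b ^ n * qpow Q n x y ≤ qpow Q' n x y := by
  intro n
  induction n with
  | zero => intro x y; simp [qpow]
  | succ n ih =>
      intro x y
      calc b ^ (n+1) * qpow Q (n+1) x y
          = ∑' w, (b * Q x w) * (b ^ n * qpow Q n w y) := by
            rw [show qpow Q (n+1) x y = ∑' w, Q x w * qpow Q n w y from rfl,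
               ← ENNReal.tsum_mul_left]
            exact tsum_congr fun w => by ring
        _ ≤ ∑' w, Q' x w * qpow Q' n w y := by
            exact ENNReal.tsum_le_tsum fun w => mul_le_mul' (hle x w) (ih w y)
        _ = qpow Q' (n+1) x y := rfl

/-! ### convRadius and specRadius lemmas -/

lemma convRadius_ge {a : ℕ → ℝ} {z : ℝ≥0} (h : Summable fun n => a n * (z:ℝ)^n) :
    (z : ℝ≥0∞) ≤ convRadius a :=
  le_iSup₂ (f := fun (z : ℝ≥0) (_ : Summable fun n => a n * (z:ℝ)^n) => (z : ℝ≥0∞)) z h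

lemma kpow_diag_le_pow {P : S → S → ℝ} (hP : IsTransProb P) {t : ℝ≥0}
    (hb : ∀ n x, qpow (toQ P) n x x ≤ (t:ℝ≥0∞)^n) (n : ℕ) (x : S) :
    kpow P n x x ≤ (t:ℝ)^n := by
  rw [kpow_toReal hP]
  have h1 : (qpow (toQ P) n x x).toReal ≤ (((t:ℝ≥0∞))^n).toReal := by
    refine ENNReal.toReal_mono ?_ (hb n x)
    exact ENNReal.pow_ne_top ENNReal.coe_ne_top
  simpa using h1

lemma convRadius_diag_ge_one {P : S → S → ℝ} (hP : IsTransProb P) (x : S) :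
    1 ≤ convRadius fun n => kpow P n x x := by
  refine ENNReal.le_of_forall_nnreal_lt fun r hr => ?_
  refine convRadius_ge ?_
  have hr1 : (r:ℝ) < 1 := by exact_mod_cast hr
  have hgeo : Summable fun n : ℕ => ((r:ℝ))^n :=
    summable_geometric_of_lt_one r.coe_nonneg hr1
  refine hgeo.of_nonneg_of_le
    (fun n => mul_nonneg (kpow_nonneg hP n x x) (pow_nonneg r.coe_nonneg n))
    (fun n => ?_)
  have hk1 : kpow P n x x ≤ 1 := by
    have := kpow_diag_le_pow hP (t := 1)
      (fun n x => by simpa using qpow_le_one _ (toQ_rowsum hP) n x x) n x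
    simpa using this
  calc kpow P n x x * (r:ℝ)^n ≤ 1 * (r:ℝ)^n := by
        exact mul_le_mul_of_nonneg_right hk1 (pow_nonneg r.coe_nonneg n)
    _ = (r:ℝ)^n := one_mul _

lemma specRadiusE_le_one {P : S → S → ℝ} (hP : IsTransProb P) : specRadiusE P ≤ 1 :=
  iSup_le fun x => ENNReal.inv_le_one.mpr (convRadius_diag_ge_one hP x)

lemma specRadius_le_one {P : S → S → ℝ} (hP : IsTransProb P) : specRadius P ≤ 1 := by
  have := ENNReal.toReal_mono ENNReal.one_ne_top (specRadiusE_le_one hP)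
  simpa [specRadius] using this

lemma specRadius_lt_one_of_bound [Nonempty S] {P : S → S → ℝ} (hP : IsTransProb P)
    (t : ℝ≥0) (ht : t < 1) (hb : ∀ n x, qpow (toQ P) n x x ≤ (t:ℝ≥0∞)^n) :
    specRadius P < 1 := by
  have htR : (t:ℝ) < 1 := by exact_mod_cast ht
  set z : ℝ≥0 := 2 / (1 + t) with hz
  have hzR : (z:ℝ) = 2 / (1 + (t:ℝ)) := by
    rw [hz]; push_cast; ring
  have hden : (0:ℝ) < 1 + (t:ℝ) := by positivity
  have h1z : (1:ℝ) < (z:ℝ) := by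
    rw [hzR, lt_div_iff₀ hden]; linarith
  have hzt : (t:ℝ) * (z:ℝ) < 1 := by
    rw [hzR]
    rw [mul_div_assoc', div_lt_one hden]
    linarith [t.coe_nonneg]
  have hz0 : z ≠ 0 := by
    intro h0
    rw [h0] at h1z; simp at h1z; linarith
  have hsum : ∀ x : S, Summable fun n => kpow P n x x * (z:ℝ)^n := by
    intro x
    have hgeo : Summable fun n : ℕ => ((t:ℝ) * (z:ℝ))^n :=
      summable_geometric_of_lt_one (by positivity) hzt
    refine hgeo.of_nonneg_of_le
      (fun n => mul_nonneg (kpow_nonneg hP n x x) (by positivity)) (fun n => ?_)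
    calc kpow P n x x * (z:ℝ)^n ≤ (t:ℝ)^n * (z:ℝ)^n := by
          exact mul_le_mul_of_nonneg_right (kpow_diag_le_pow hP hb n x) (by positivity)
      _ = ((t:ℝ) * (z:ℝ))^n := (mul_pow _ _ _).symm
  have hE : specRadiusE P ≤ ((z:ℝ≥0∞))⁻¹ := by
    refine iSup_le fun x => ?_
    rw [ENNReal.inv_le_inv]
    exact convRadius_ge (hsum x)
  have hfin : ((z:ℝ≥0∞))⁻¹ ≠ ⊤ := by
    simp [ENNReal.inv_ne_top, hz0]
  have h2 : specRadius P ≤ (((z:ℝ≥0∞))⁻¹).toReal := by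
    exact ENNReal.toReal_mono hfin hE
  have h3 : (((z:ℝ≥0∞))⁻¹).toReal = ((z:ℝ))⁻¹ := by
    rw [← ENNReal.coe_inv hz0]
    simp
  rw [h3] at h2
  have : ((z:ℝ))⁻¹ < 1 := by
    rw [inv_lt_one_iff₀]; right; exact h1z
  linarith

/-! ### Construction of a superharmonic function from `ρ < 1` -/

lemma exists_superharmonic [Nonempty S] {P : S → S → ℝ} (hP : IsTransProb P)
    (hirr : ∀ x y : S, ∃ n, qpow (toQ P) n x y ≠ 0) (hρ : specRadius P < 1) :
    ∃ (h : S → ℝ≥0∞) (t : ℝ≥0), t < 1 ∧ (∀ x, h x ≠ 0) ∧ (∀ x, h x ≠ ⊤) ∧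
      ∀ x, ∑' y, toQ P x y * h y ≤ (t:ℝ≥0∞) * h x := by
  have hEne : specRadiusE P ≠ ⊤ :=
    ne_top_of_le_ne_top ENNReal.one_ne_top (specRadiusE_le_one hP)
  have hElt : specRadiusE P < 1 := by
    have := (ENNReal.toReal_lt_toReal hEne ENNReal.one_ne_top)
    rw [← this]
    simpa [specRadius] using hρ
  obtain ⟨x₀⟩ := (inferInstance : Nonempty S)
  have hinv : (convRadius fun n => kpow P n x₀ x₀)⁻¹ < 1 :=
    lt_of_le_of_lt (le_iSup (fun x => (convRadius fun n => kpow P n x x)⁻¹) x₀) hElt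
  have hcr1 : (1:ℝ≥0∞) < convRadius fun n => kpow P n x₀ x₀ :=
    ENNReal.inv_lt_one.mp hinv
  rw [convRadius, lt_iSup_iff] at hcr1
  obtain ⟨z, hz⟩ := hcr1
  rw [lt_iSup_iff] at hz
  obtain ⟨hsum, hz1E⟩ := hz
  have hz1 : (1:ℝ≥0) < z := by exact_mod_cast hz1E
  set w : ℝ≥0∞ := (z : ℝ≥0∞) with hwdef
  have hw0 : w ≠ 0 := by
    simp only [hwdef, ne_eq, ENNReal.coe_eq_zero]
    intro h0; rw [h0] at hz1; exact absurd hz1 (by simp)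
  have hwtop : w ≠ ⊤ := ENNReal.coe_ne_top
  have hof : ∀ n, ENNReal.ofReal (kpow P n x₀ x₀ * (z:ℝ)^n)
      = qpow (toQ P) n x₀ x₀ * w^n := by
    intro n
    rw [ENNReal.ofReal_mul (kpow_nonneg hP n x₀ x₀), (kpow_spec hP n x₀ x₀).2,
      ENNReal.ofReal_pow z.coe_nonneg, ENNReal.ofReal_coe_nnreal]
  set A : ℝ≥0∞ := ∑' n, qpow (toQ P) n x₀ x₀ * w^n with hA
  have hAfin : A ≠ ⊤ := by
    rw [hA, ← tsum_congr hof,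
      ← ENNReal.ofReal_tsum_of_nonneg
        (fun n => mul_nonneg (kpow_nonneg hP n x₀ x₀) (by positivity)) hsum]
    exact ENNReal.ofReal_ne_top
  set h : S → ℝ≥0∞ := fun x => ∑' n, qpow (toQ P) n x x₀ * w^n with hh
  have hofgen : ∀ x n, ENNReal.ofReal (kpow P n x x₀ * (z:ℝ)^n)
      = qpow (toQ P) n x x₀ * w^n := by
    intro x n
    rw [ENNReal.ofReal_mul (kpow_nonneg hP n x x₀), (kpow_spec hP n x x₀).2,
      ENNReal.ofReal_pow z.coe_nonneg, ENNReal.ofReal_coe_nnreal]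
  have hpos : ∀ x, h x ≠ 0 := by
    intro x h0
    obtain ⟨m, hm⟩ := hirr x x₀
    have hterm : qpow (toQ P) m x x₀ * w^m ≤ h x := ENNReal.le_tsum m
    rw [h0, le_zero_iff] at hterm
    exact (mul_ne_zero hm (pow_ne_zero m hw0)) hterm
  have hfin : ∀ x, h x ≠ ⊤ := by
    intro x
    obtain ⟨k, hk⟩ := hirr x₀ x
    set c : ℝ≥0∞ := qpow (toQ P) k x₀ x with hc
    have hkey : ∀ n, (c * w^k) * (qpow (toQ P) n x x₀ * w^n)
        ≤ qpow (toQ P) (k+n) x₀ x₀ * w^(k+n) := by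
      intro n
      have h1 : c * qpow (toQ P) n x x₀ ≤ qpow (toQ P) (k+n) x₀ x₀ := by
        rw [qpow_add]
        exact ENNReal.le_tsum x
      calc (c * w^k) * (qpow (toQ P) n x x₀ * w^n)
          = (c * qpow (toQ P) n x x₀) * w^(k+n) := by rw [pow_add]; ring
        _ ≤ qpow (toQ P) (k+n) x₀ x₀ * w^(k+n) := mul_le_mul_left h1 _
    have hle : (c * w^k) * h x ≤ A := by
      calc (c * w^k) * h x = ∑' n, (c * w^k) * (qpow (toQ P) n x x₀ * w^n) :=
          ENNReal.tsum_mul_left.symm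
        _ ≤ ∑' n, qpow (toQ P) (k+n) x₀ x₀ * w^(k+n) := ENNReal.tsum_le_tsum hkey
        _ ≤ A := by
            rw [hA]
            exact ENNReal.tsum_comp_le_tsum_of_injective (add_right_injective k)
              (fun m => qpow (toQ P) m x₀ x₀ * w^m)
    intro htop
    rw [htop, ENNReal.mul_top (mul_ne_zero hk (pow_ne_zero k hw0))] at hle
    exact hAfin (top_le_iff.mp hle)
  have hsup : ∀ x, ∑' y, toQ P x y * h y ≤ w⁻¹ * h x := by
    intro x
    have hstep : ∑' y, toQ P x y * h y = ∑' n, qpow (toQ P) (n+1) x x₀ * w^n := by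
      calc ∑' y, toQ P x y * h y
          = ∑' y, ∑' n, toQ P x y * (qpow (toQ P) n y x₀ * w^n) := by
            exact tsum_congr fun y => ENNReal.tsum_mul_left.symm
        _ = ∑' n, ∑' y, toQ P x y * (qpow (toQ P) n y x₀ * w^n) := ENNReal.tsum_comm
        _ = ∑' n, (∑' y, toQ P x y * qpow (toQ P) n y x₀) * w^n := by
            refine tsum_congr fun n => ?_
            rw [← ENNReal.tsum_mul_right]
            exact tsum_congr fun y => by ring
        _ = ∑' n, qpow (toQ P) (n+1) x x₀ * w^n := rfl
    have hmulw : w * ∑' n, qpow (toQ P) (n+1) x x₀ * w^n ≤ h x := by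
      calc w * ∑' n, qpow (toQ P) (n+1) x x₀ * w^n
          = ∑' n, qpow (toQ P) (n+1) x x₀ * w^(n+1) := by
            rw [← ENNReal.tsum_mul_left]
            exact tsum_congr fun n => by rw [pow_succ]; ring
        _ ≤ h x := by
            rw [hh]
            exact ENNReal.tsum_comp_le_tsum_of_injective Nat.succ_injective
              (fun m => qpow (toQ P) m x x₀ * w^m)
    rw [hstep]
    calc ∑' n, qpow (toQ P) (n+1) x x₀ * w^n
        = w⁻¹ * (w * ∑' n, qpow (toQ P) (n+1) x x₀ * w^n) := by
          rw [← mul_assoc, ENNReal.inv_mul_cancel hw0 hwtop, one_mul]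
      _ ≤ w⁻¹ * h x := mul_le_mul_right hmulw _
  refine ⟨h, z⁻¹, ?_, hpos, hfin, ?_⟩
  · exact inv_lt_one_of_one_lt₀ hz1
  · intro x
    have : ((z⁻¹ : ℝ≥0) : ℝ≥0∞) = w⁻¹ := by
      rw [hwdef, ENNReal.coe_inv (by intro h0; rw [h0] at hz1; exact absurd hz1 (by simp))]
    rw [this]
    exact hsup x

/-! ### The lazy chain -/

lemma lazy_isTransProb {P : S → S → ℝ} (hP : IsTransProb P) {L : Set S} {κ : ℝ}
    (hκ : κ ∈ Set.Ico (0:ℝ) 1) : IsTransProb (lazy P L κ) := by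
  obtain ⟨hκ0, hκ1⟩ := hκ
  constructor
  · intro x y
    by_cases hx : x ∈ L
    · simp only [lazy, if_pos hx]
      have h1 : (0:ℝ) ≤ if x = y then κ else 0 := by split <;> [exact hκ0; exact le_rfl]
      have h2 : (0:ℝ) ≤ (1 - κ) * P x y := mul_nonneg (by linarith) (hP.1 x y)
      linarith
    · simp only [lazy, if_neg hx]
      exact hP.1 x y
  · intro x
    by_cases hx : x ∈ L
    · have h1 : HasSum (fun y => if x = y then κ else 0) κ := by
        have := hasSum_ite_eq x κ
        refine this.congr_fun fun y => ?_
        by_cases h : x = y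
        · subst h; simp
        · simp [h, Ne.symm h]
      have h2 : HasSum (fun y => (1 - κ) * P x y) ((1 - κ) * 1) := (hP.2 x).mul_left _
      have h3 := h1.add h2
      have : κ + (1 - κ) * 1 = 1 := by ring
      rw [this] at h3
      refine h3.congr_fun fun y => ?_
      simp only [lazy, if_pos hx]
    · have := hP.2 x
      refine this.congr_fun fun y => ?_
      simp only [lazy, if_neg hx]

lemma toQ_lazy {P : S → S → ℝ} (hP : IsTransProb P) {L : Set S} {κ : ℝ}
    (hκ : κ ∈ Set.Ico (0:ℝ) 1) (x y : S) :
    toQ (lazy P L κ) x y = if x ∈ L then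
      (if x = y then ENNReal.ofReal κ else 0) + ENNReal.ofReal (1 - κ) * toQ P x y
    else toQ P x y := by
  obtain ⟨hκ0, hκ1⟩ := hκ
  by_cases hx : x ∈ L
  · simp only [toQ, lazy, if_pos hx]
    rw [ENNReal.ofReal_add (by split <;> [exact hκ0; exact le_rfl]) (mul_nonneg (by linarith) (hP.1 x y)),
      ENNReal.ofReal_mul (by linarith)]
    congr 1
    split <;> simp
  · simp only [toQ, lazy, if_neg hx]

lemma lazy_row {P : S → S → ℝ} (hP : IsTransProb P) {L : Set S} {κ : ℝ}
    (hκ : κ ∈ Set.Ico (0:ℝ) 1) (h : S → ℝ≥0∞) {x : S} (hx : x ∈ L) :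
    ∑' y, toQ (lazy P L κ) x y * h y
      = ENNReal.ofReal κ * h x + ENNReal.ofReal (1 - κ) * ∑' y, toQ P x y * h y := by
  calc ∑' y, toQ (lazy P L κ) x y * h y
      = ∑' y, ((if x = y then ENNReal.ofReal κ else 0) * h y
          + ENNReal.ofReal (1 - κ) * (toQ P x y * h y)) := by
        refine tsum_congr fun y => ?_
        rw [toQ_lazy hP hκ, if_pos hx, add_mul, mul_assoc]
    _ = (∑' y, (if x = y then ENNReal.ofReal κ else 0) * h y)
          + ∑' y, ENNReal.ofReal (1 - κ) * (toQ P x y * h y) := ENNReal.tsum_add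
    _ = ENNReal.ofReal κ * h x + ENNReal.ofReal (1 - κ) * ∑' y, toQ P x y * h y := by
        rw [tsum_ite_mul, ENNReal.tsum_mul_left]

lemma t_le_combo {κ : ℝ} (hκ : κ ∈ Set.Ico (0:ℝ) 1) {t : ℝ≥0∞} (ht1 : t ≤ 1) :
    t ≤ ENNReal.ofReal κ + ENNReal.ofReal (1 - κ) * t := by
  obtain ⟨hκ0, hκ1⟩ := hκ
  have hab : ENNReal.ofReal κ + ENNReal.ofReal (1 - κ) = 1 := by
    rw [← ENNReal.ofReal_add hκ0 (by linarith)]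
    norm_num
  calc t = (ENNReal.ofReal κ + ENNReal.ofReal (1 - κ)) * t := by rw [hab, one_mul]
    _ = ENNReal.ofReal κ * t + ENNReal.ofReal (1 - κ) * t := add_mul _ _ _
    _ ≤ ENNReal.ofReal κ * 1 + ENNReal.ofReal (1 - κ) * t := by
        exact add_le_add_left (mul_le_mul_right ht1 _) _
    _ = ENNReal.ofReal κ + ENNReal.ofReal (1 - κ) * t := by rw [mul_one]

lemma transfer_forward {P : S → S → ℝ} (hP : IsTransProb P) {L : Set S} {κ : ℝ}
    (hκ : κ ∈ Set.Ico (0:ℝ) 1) (h : S → ℝ≥0∞) (t : ℝ≥0) (ht1 : (t:ℝ≥0∞) ≤ 1)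
    (hsup : ∀ x, ∑' y, toQ P x y * h y ≤ (t:ℝ≥0∞) * h x) (x : S) :
    ∑' y, toQ (lazy P L κ) x y * h y
      ≤ (ENNReal.ofReal κ + ENNReal.ofReal (1 - κ) * t) * h x := by
  by_cases hx : x ∈ L
  · rw [lazy_row hP hκ h hx, add_mul, mul_assoc]
    exact add_le_add_right (mul_le_mul_right (hsup x) _) _
  · have heq : ∑' y, toQ (lazy P L κ) x y * h y = ∑' y, toQ P x y * h y :=
      tsum_congr fun y => by rw [toQ_lazy hP hκ, if_neg hx]
    rw [heq]
    exact (hsup x).trans (mul_le_mul_left (t_le_combo hκ ht1) _)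

lemma transfer_backward {P : S → S → ℝ} (hP : IsTransProb P) {L : Set S} {κ : ℝ}
    (hκ : κ ∈ Set.Ico (0:ℝ) 1) (h : S → ℝ≥0∞) (hfin : ∀ x, h x ≠ ⊤)
    (t : ℝ≥0∞) (ht1 : t ≤ 1)
    (hsup : ∀ x, ∑' y, toQ (lazy P L κ) x y * h y ≤ t * h x) (x : S) :
    ∑' y, toQ P x y * h y ≤ t * h x := by
  obtain ⟨hκ0, hκ1⟩ := hκ
  by_cases hx : x ∈ L
  · have heq := lazy_row hP ⟨hκ0, hκ1⟩ h hx
    have hb0 : ENNReal.ofReal (1 - κ) ≠ 0 := (ENNReal.ofReal_pos.mpr (by linarith)).ne'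
    have hbtop : ENNReal.ofReal (1 - κ) ≠ ⊤ := ENNReal.ofReal_ne_top
    have step1 : ENNReal.ofReal (1 - κ) * ∑' y, toQ P x y * h y
        ≤ t * h x - ENNReal.ofReal κ * h x := by
      refine ENNReal.le_sub_of_add_le_left
        (ENNReal.mul_ne_top ENNReal.ofReal_ne_top (hfin x)) ?_
      rw [← heq]; exact hsup x
    have step2 : t * h x - ENNReal.ofReal κ * h x
        ≤ ENNReal.ofReal (1 - κ) * (t * h x) := by
      rw [tsub_le_iff_left]
      calc t * h x ≤ (ENNReal.ofReal κ + ENNReal.ofReal (1 - κ) * t) * h x :=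
          mul_le_mul_left (t_le_combo ⟨hκ0, hκ1⟩ ht1) _
        _ = ENNReal.ofReal κ * h x + ENNReal.ofReal (1 - κ) * (t * h x) := by
          rw [add_mul, mul_assoc]
    exact (ENNReal.mul_le_mul_iff_right hb0 hbtop).mp (step1.trans step2)
  · have heq : ∑' y, toQ (lazy P L κ) x y * h y = ∑' y, toQ P x y * h y :=
      tsum_congr fun y => by rw [toQ_lazy hP ⟨hκ0, hκ1⟩, if_neg hx]
    rw [← heq]; exact hsup x

theorem lazy_specRadius_eq_one_iff {S : Type*} [Countable S] [Infinite S] (P : S → S → ℝ)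
    (hP : IsTransProb P) (hirr : Irred P)
    (L : Set S) (κ : ℝ) (hκ : κ ∈ Set.Ico (0 : ℝ) 1) :
    (specRadius P = 1 ↔ specRadius (lazy P L κ) = 1) ∧
    (specRadius P < 1 ↔ specRadius (lazy P L κ) < 1) := by
  obtain ⟨hκ0, hκ1⟩ := hκ
  have hPL : IsTransProb (lazy P L κ) := lazy_isTransProb hP ⟨hκ0, hκ1⟩
  have hirrQ : ∀ x y : S, ∃ n, qpow (toQ P) n x y ≠ 0 := by
    intro x y
    obtain ⟨n, hn⟩ := hirr x y
    exact ⟨n, by rw [← (kpow_spec hP n x y).2]; exact (ENNReal.ofReal_pos.mpr hn).ne'⟩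
  have hble : ∀ x y, ENNReal.ofReal (1 - κ) * toQ P x y ≤ toQ (lazy P L κ) x y := by
    intro x y
    rw [toQ_lazy hP ⟨hκ0, hκ1⟩]
    by_cases hx : x ∈ L
    · rw [if_pos hx]; exact le_add_self.trans_eq rfl
    · rw [if_neg hx]
      calc ENNReal.ofReal (1 - κ) * toQ P x y ≤ 1 * toQ P x y :=
          mul_le_mul_left (ENNReal.ofReal_le_one.mpr (by linarith)) _
        _ = toQ P x y := one_mul _
  have hirrQ' : ∀ x y : S, ∃ n, qpow (toQ (lazy P L κ)) n x y ≠ 0 := by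
    intro x y
    obtain ⟨n, hn⟩ := hirrQ x y
    refine ⟨n, fun h0 => ?_⟩
    have := qpow_mono_scaled (toQ P) (toQ (lazy P L κ)) _ hble n x y
    rw [h0, le_zero_iff] at this
    exact (mul_ne_zero (pow_ne_zero n (ENNReal.ofReal_pos.mpr (by linarith)).ne') hn) this
  have key : specRadius P < 1 ↔ specRadius (lazy P L κ) < 1 := by
    constructor
    · intro hρ
      obtain ⟨h, t, ht, hpos, hfin, hsup⟩ := exists_superharmonic hP hirrQ hρ
      have ht1 : (t:ℝ≥0∞) ≤ 1 := by exact_mod_cast ht.le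
      set t1 : ℝ≥0 := κ.toNNReal + (1 - κ).toNNReal * t with ht1def
      have hcoe : ((t1:ℝ≥0)) = (κ.toNNReal + (1 - κ).toNNReal * t : ℝ≥0) := rfl
      have hcoeE : ((t1 : ℝ≥0) : ℝ≥0∞)
          = ENNReal.ofReal κ + ENNReal.ofReal (1 - κ) * (t:ℝ≥0∞) := by
        rw [ht1def]
        push_cast
        rfl
      have hsup' : ∀ x, ∑' y, toQ (lazy P L κ) x y * h y ≤ ((t1:ℝ≥0):ℝ≥0∞) * h x := by
        intro x
        rw [hcoeE]
        exact transfer_forward hP ⟨hκ0, hκ1⟩ h t ht1 hsup x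
      have ht1lt : t1 < 1 := by
        have htR : (t:ℝ) < 1 := by exact_mod_cast ht
        have hT : ((t1:ℝ≥0):ℝ) < 1 := by
          rw [ht1def]
          push_cast
          rw [Real.coe_toNNReal κ hκ0, Real.coe_toNNReal (1 - κ) (by linarith)]
          nlinarith [t.coe_nonneg]
        exact_mod_cast hT
      exact specRadius_lt_one_of_bound hPL t1 ht1lt
        (fun n x => qpow_diag_le _ h _ hpos hfin hsup' n x)
    · intro hρ'
      obtain ⟨h, t, ht, hpos, hfin, hsup'⟩ := exists_superharmonic hPL hirrQ' hρ'
      have ht1 : (t:ℝ≥0∞) ≤ 1 := by exact_mod_cast ht.le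
      have hsup : ∀ x, ∑' y, toQ P x y * h y ≤ (t:ℝ≥0∞) * h x :=
        transfer_backward hP ⟨hκ0, hκ1⟩ h hfin _ ht1 hsup'
      exact specRadius_lt_one_of_bound hP t ht
        (fun n x => qpow_diag_le _ h _ hpos hfin hsup n x)
  have le1 : specRadius P ≤ 1 := specRadius_le_one hP
  have le1' : specRadius (lazy P L κ) ≤ 1 := specRadius_le_one hPL
  have e1 : specRadius P = 1 ↔ ¬ specRadius P < 1 :=
    ⟨fun h => by rw [h]; exact lt_irrefl 1, fun h => le_antisymm le1 (not_lt.mp h)⟩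
  have e2 : specRadius (lazy P L κ) = 1 ↔ ¬ specRadius (lazy P L κ) < 1 :=
    ⟨fun h => by rw [h]; exact lt_irrefl 1, fun h => le_antisymm le1' (not_lt.mp h)⟩
  exact ⟨e1.trans ((not_congr key).trans e2.symm), key⟩
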